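/- For any n ≥ 2 and any m with 1 ≤ m ≤ binom(n−1, ⌊(n−1)/2⌋), there exists an intersection complete code C ⊆ 2^{[n]} with exactly m+1 maximal codewords such that C has an open convex realization in ℝ^m but no open convex realization in ℝ^{m−1}. -/

import Mathlib

/-- The combinatorial code of a collection of sets `U` in `X`: the set of
all `σ ⊆ [n]` such that some point `x ∈ X` lies in exactly the `U i` with `i ∈ σ`. -/
def codeOf {n : ℕ} {X : Type*} (U : Fin n → Set X) : Set (Finset (Fin n)) :=
  {σ | ∃ x : X, ∀ i, i ∈ σ ↔ x ∈ U i}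

/-- `C` has a realization by convex open sets in `ℝ^d`. -/
def HasOpenRealization (n : ℕ) (C : Set (Finset (Fin n))) (d : ℕ) : Prop :=
  ∃ U : Fin n → Set (EuclideanSpace ℝ (Fin d)),
    (∀ i, Convex ℝ (U i)) ∧ (∀ i, IsOpen (U i)) ∧ codeOf U = C


section GeoPart

open Set

noncomputable section Geometry

variable {d : ℕ}

local notation "Eu" => EuclideanSpace ℝ (Fin d)

def pol (A : Set (EuclideanSpace ℝ (Fin d))) : Set (EuclideanSpace ℝ (Fin d)) :=
  {y | ∀ x ∈ A, (inner ℝ x y : ℝ) ≤ 1}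

lemma mem_pol {A : Set Eu} {y : Eu} : y ∈ pol A ↔ ∀ x ∈ A, (inner ℝ x y : ℝ) ≤ 1 := Iff.rfl

lemma pol_anti {A B : Set Eu} (h : A ⊆ B) : pol B ⊆ pol A :=
  fun _ hy x hx => hy x (h hx)

lemma zero_mem_pol (A : Set Eu) : (0 : Eu) ∈ pol A := by intro x _; simp

lemma isClosed_pol (A : Set Eu) : IsClosed (pol A) := by
  have : pol A = ⋂ x ∈ A, {y : Eu | (inner ℝ x y : ℝ) ≤ 1} := by ext y; simp [pol]
  rw [this]
  exact isClosed_biInter fun x _ =>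
    isClosed_le (Continuous.inner continuous_const continuous_id) continuous_const

lemma pol_mem_of_closure {A : Set Eu} {y : Eu} (hy : y ∈ pol A) {x : Eu}
    (hx : x ∈ closure A) : (inner ℝ x y : ℝ) ≤ 1 := by
  have hc : Continuous fun z : Eu => (inner ℝ z y : ℝ) :=
    Continuous.inner continuous_id continuous_const
  exact (closure_minimal (fun z hz => hy z hz) (isClosed_le hc continuous_const)) hx

/-- the vector corresponding to a functional -/
def fvec (f : Eu →L[ℝ] ℝ) : Eu := (InnerProductSpace.toDual ℝ (EuclideanSpace ℝ (Fin d))).symm f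

lemma inner_fvec (f : Eu →L[ℝ] ℝ) (x : Eu) : (inner ℝ (fvec f) x : ℝ) = f x :=
  InnerProductSpace.toDual_symm_apply

lemma inner_fvec' (f : Eu →L[ℝ] ℝ) (x : Eu) : (inner ℝ x (fvec f) : ℝ) = f x := by
  rw [real_inner_comm]; exact inner_fvec f x

/-- bipolar theorem -/
lemma pol_pol_eq_closure {A : Set Eu} (hA : Convex ℝ A) (h0 : (0 : Eu) ∈ A) :
    pol (pol A) = closure A := by
  apply Subset.antisymm
  · intro w hw
    by_contra hwc
    obtain ⟨f, u, hfA, hfw⟩ :=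
      geometric_hahn_banach_closed_point hA.closure isClosed_closure hwc
    have hu : 0 < u := by
      have := hfA 0 (subset_closure h0); simpa using this
    have hy : u⁻¹ • fvec f ∈ pol A := by
      intro x hx
      have hfx : f x < u := hfA x (subset_closure hx)
      rw [real_inner_smul_right, inner_fvec']
      rw [inv_mul_le_iff₀ hu]; linarith
    have := hw _ hy
    rw [real_inner_smul_left, inner_fvec] at this
    rw [inv_mul_le_iff₀ hu] at this
    linarith
  · refine closure_minimal ?_ (isClosed_pol _)
    intro x hx y hy
    rw [real_inner_comm]
    exact hy x hx

lemma pol_compact {A : Set Eu} {ρ : ℝ} (hρ : 0 < ρ) (hball : Metric.ball (0 : Eu) ρ ⊆ A) :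
    IsCompact (pol A) := by
  refine (isCompact_closedBall (0 : Eu) (2 / ρ)).of_isClosed_subset (isClosed_pol A) ?_
  intro y hy
  simp only [Metric.mem_closedBall, dist_zero_right]
  by_contra hn
  push_neg at hn
  have hy0 : y ≠ 0 := by
    intro h; rw [h] at hn; simp at hn
    have : (0:ℝ) < 2/ρ := by positivity
    linarith
  have hny : (0:ℝ) < ‖y‖ := norm_pos_iff.2 hy0
  set x := (ρ / 2 / ‖y‖) • y with hx
  have hxball : x ∈ Metric.ball (0 : Eu) ρ := by
    simp only [Metric.mem_ball, dist_zero_right, hx, norm_smul]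
    rw [Real.norm_eq_abs, abs_of_pos (by positivity)]
    rw [div_mul_cancel₀ _ (norm_ne_zero_iff.2 hy0)]
    linarith
  have h1 := hy x (hball hxball)
  rw [hx, real_inner_smul_left, real_inner_self_eq_norm_sq] at h1
  have : ρ / 2 / ‖y‖ * (‖y‖ * ‖y‖) = ρ / 2 * ‖y‖ := by field_simp
  rw [show ‖y‖ ^ 2 = ‖y‖ * ‖y‖ by ring, this] at h1
  have h2 : 2 / ρ < ‖y‖ := hn
  have h3 : ρ * (2 / ρ) < ρ * ‖y‖ := (mul_lt_mul_iff_right₀ hρ).2 h2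
  rw [show ρ * (2 / ρ) = 2 by field_simp] at h3
  linarith


/-- closures of two open convex sets through a common point intersect inside closure of their
intersection -/
lemma closure_inter_subset_closure {A B K : Set Eu}
    (hA : Convex ℝ A) (hAo : IsOpen A) (hB : Convex ℝ B) (hBo : IsOpen B)
    (h0A : (0 : Eu) ∈ A) (h0B : (0 : Eu) ∈ B) (hsub : A ∩ B ⊆ K) :
    closure A ∩ closure B ⊆ closure K := by
  intro w hw
  have hsegA : openSegment ℝ (0 : Eu) w ⊆ A := by
    have h := hA.openSegment_interior_closure_subset_interior
      (by rw [hAo.interior_eq]; exact h0A) hw.1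
    rwa [hAo.interior_eq] at h
  have hsegB : openSegment ℝ (0 : Eu) w ⊆ B := by
    have h := hB.openSegment_interior_closure_subset_interior
      (by rw [hBo.interior_eq]; exact h0B) hw.2
    rwa [hBo.interior_eq] at h
  have hseg : openSegment ℝ (0 : Eu) w ⊆ K := fun z hz => hsub ⟨hsegA hz, hsegB hz⟩
  have : w ∈ closure (openSegment ℝ (0 : Eu) w) := by
    rw [closure_openSegment]
    exact right_mem_segment ℝ 0 w
  exact closure_mono hseg this

/-- convex join of compacts is compact -/
lemma isCompact_convexJoin {s t : Set Eu} (hs : IsCompact s) (ht : IsCompact t) :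
    IsCompact (convexJoin ℝ s t) := by
  have himg : convexJoin ℝ s t =
      (fun p : ℝ × (EuclideanSpace ℝ (Fin d)) × (EuclideanSpace ℝ (Fin d)) =>
        (1 - p.1) • p.2.1 + p.1 • p.2.2) '' ((Icc (0:ℝ) 1) ×ˢ s ×ˢ t) := by
    ext z
    constructor
    · rintro hz
      rw [mem_convexJoin] at hz
      obtain ⟨a, ha, b, hb, hzab⟩ := hz
      rw [segment_eq_image] at hzab
      obtain ⟨θ, hθ, hθz⟩ := hzab
      exact ⟨(θ, a, b), ⟨hθ, ha, hb⟩, hθz⟩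
    · rintro ⟨⟨θ, a, b⟩, ⟨hθ, ha, hb⟩, rfl⟩
      rw [mem_convexJoin]
      refine ⟨a, ha, b, hb, ?_⟩
      rw [segment_eq_image]
      exact ⟨θ, hθ, rfl⟩
  rw [himg]
  apply IsCompact.image (isCompact_Icc.prod (hs.prod ht))
  apply Continuous.add
  · exact (continuous_const.sub continuous_fst).smul (continuous_fst.comp continuous_snd)
  · exact continuous_fst.smul ((continuous_snd.comp continuous_snd))

/-- convex absorption: subconvex combinations with deficit stay in a convex set containing 0 -/
lemma convex_absorb {B : Set Eu} (hB : Convex ℝ B) (h0 : (0 : Eu) ∈ B)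
    {ι : Type*} (t : Finset ι) (w : ι → ℝ) (v : ι → EuclideanSpace ℝ (Fin d))
    (hw : ∀ i ∈ t, 0 ≤ w i) (hsum : ∑ i ∈ t, w i ≤ 1) (hv : ∀ i ∈ t, v i ∈ B) :
    ∑ i ∈ t, w i • v i ∈ B := by
  set τ := ∑ i ∈ t, w i with hτ
  have hτ0 : 0 ≤ τ := Finset.sum_nonneg hw
  rcases eq_or_lt_of_le hτ0 with h | h
  · have hz : ∀ i ∈ t, w i = 0 := by
      intro i hi
      exact le_antisymm (by
        have := Finset.single_le_sum hw hi
        rw [← hτ] at this; linarith) (hw i hi)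
    have : ∑ i ∈ t, w i • v i = 0 := Finset.sum_eq_zero fun i hi => by rw [hz i hi, zero_smul]
    rw [this]; exact h0
  · have hq : ∑ i ∈ t, (w i / τ) • v i ∈ B := by
      apply hB.sum_mem
      · intro i hi; exact div_nonneg (hw i hi) (le_of_lt h)
      · rw [← Finset.sum_div, ← hτ, div_self (ne_of_gt h)]
      · exact hv
    have key : ∑ i ∈ t, w i • v i = τ • (∑ i ∈ t, (w i / τ) • v i) + (1 - τ) • (0 : Eu) := by
      rw [smul_zero, add_zero, Finset.smul_sum]
      apply Finset.sum_congr rfl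
      intro i hi
      rw [smul_smul, mul_div_cancel₀ _ (ne_of_gt h)]
    rw [key]
    exact hB hq h0 (le_of_lt h) (by linarith) (by ring)


theorem petals_dim_bound
    (K W : Set (EuclideanSpace ℝ (Fin d)))
    (A : Fin (d + 1) → Set (EuclideanSpace ℝ (Fin d)))
    (hKc : Convex ℝ K) (hKo : IsOpen K) (hKne : K.Nonempty)
    (hWc : Convex ℝ W) (hWo : IsOpen W)
    (hKW : K ∩ W = ∅)
    (hAc : ∀ i, Convex ℝ (A i)) (hAo : ∀ i, IsOpen (A i))
    (hKA : ∀ i, K ⊆ A i)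
    (hAA : ∀ i j, i ≠ j → A i ∩ A j ⊆ K)
    (hAW : ∀ i, (A i ∩ W).Nonempty) : False := by
  classical
  obtain ⟨x₀, hx₀⟩ := hKne
  -- translated sets
  set K' : Set Eu := (· + x₀) ⁻¹' K with hK'
  set W' : Set Eu := (· + x₀) ⁻¹' W with hW'
  set A' : Fin (d + 1) → Set Eu := fun i => (· + x₀) ⁻¹' (A i) with hA'
  have haff : ∀ S : Set Eu, Convex ℝ S → Convex ℝ ((· + x₀) ⁻¹' S) := by
    intro S hS y hy z hz a b ha hb hab
    have h1 : a • (y + x₀) + b • (z + x₀) = a • y + b • z + (a + b) • x₀ := by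
      rw [smul_add, smul_add, add_smul]; abel
    simp only [mem_preimage] at *
    have h2 : a • y + b • z + x₀ = a • (y + x₀) + b • (z + x₀) := by
      rw [h1, hab, one_smul]
    rw [h2]
    exact hS hy hz ha hb hab
  have hcont : Continuous fun y : Eu => y + x₀ := continuous_id.add continuous_const
  have hK'c : Convex ℝ K' := haff K hKc
  have hK'o : IsOpen K' := hKo.preimage hcont
  have hW'c : Convex ℝ W' := haff W hWc
  have hW'o : IsOpen W' := hWo.preimage hcont
  have hA'c : ∀ i, Convex ℝ (A' i) := fun i => haff (A i) (hAc i)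
  have hA'o : ∀ i, IsOpen (A' i) := fun i => (hAo i).preimage hcont
  have h0K' : (0 : Eu) ∈ K' := by simp only [hK', mem_preimage, zero_add]; exact hx₀
  have h0A' : ∀ i, (0 : Eu) ∈ A' i := fun i => hKA i h0K'
  have hK'A' : ∀ i, K' ⊆ A' i := fun i z hz => hKA i hz
  have hA'A' : ∀ i j, i ≠ j → A' i ∩ A' j ⊆ K' := by
    intro i j hij z hz
    exact hAA i j hij ⟨hz.1, hz.2⟩
  have hdisj : Disjoint K' W' := by
    rw [disjoint_iff_inter_eq_empty]
    ext z; simp only [mem_inter_iff, mem_preimage, mem_empty_iff_false, iff_false]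
    intro hz
    have : (z + x₀) ∈ K ∩ W := ⟨hz.1, hz.2⟩
    rw [hKW] at this; exact this
  -- separation
  obtain ⟨f, u, hfK, hfW⟩ := geometric_hahn_banach_open_open hK'c hK'o hW'c hW'o hdisj
  have hu : 0 < u := by have := hfK 0 h0K'; simpa using this
  -- piercing points
  have hq : ∀ i, ∃ q, q ∈ A' i ∧ u < f q := by
    intro i
    obtain ⟨p, hp⟩ := hAW i
    refine ⟨p - x₀, ?_, ?_⟩
    · simp only [hA', mem_preimage, sub_add_cancel]; exact hp.1
    · have : p - x₀ ∈ W' := by simp only [hW', mem_preimage, sub_add_cancel]; exact hp.2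
      exact hfW _ this
  -- polars
  set L : Set Eu := pol K' with hL
  set B : Fin (d + 1) → Set Eu := fun i => pol (A' i) with hB
  have hBL : ∀ i, B i ⊆ L := fun i => pol_anti (hK'A' i)
  have h0B : ∀ i, (0 : Eu) ∈ B i := fun i => zero_mem_pol _
  have hBconv : ∀ i, Convex ℝ (B i) := by
    intro i; rw [hB]
    intro y₁ h₁ y₂ h₂ a b ha hb hab x hx
    have e : (inner ℝ x (a • y₁ + b • y₂) : ℝ) = a * inner ℝ x y₁ + b * inner ℝ x y₂ := by
      rw [inner_add_right, real_inner_smul_right, real_inner_smul_right]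
    rw [e]
    calc a * (inner ℝ x y₁:ℝ) + b * inner ℝ x y₂ ≤ a * 1 + b * 1 := by
          gcongr
          · exact h₁ x hx
          · exact h₂ x hx
      _ = 1 := by linarith
  have hLconv : Convex ℝ L := by
    rw [hL]
    intro y₁ h₁ y₂ h₂ a b ha hb hab x hx
    have e : (inner ℝ x (a • y₁ + b • y₂) : ℝ) = a * inner ℝ x y₁ + b * inner ℝ x y₂ := by
      rw [inner_add_right, real_inner_smul_right, real_inner_smul_right]
    rw [e]
    calc a * (inner ℝ x y₁:ℝ) + b * inner ℝ x y₂ ≤ a * 1 + b * 1 := by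
          gcongr
          · exact h₁ x hx
          · exact h₂ x hx
      _ = 1 := by linarith
  obtain ⟨ρ, hρ, hball⟩ := Metric.isOpen_iff.1 hK'o 0 h0K'
  have hLcomp : IsCompact L := pol_compact hρ hball
  have hBcomp : ∀ i, IsCompact (B i) := fun i =>
    hLcomp.of_isClosed_subset (isClosed_pol _) (hBL i)
  -- join identity
  have hJoin : ∀ i j, i ≠ j → L = convexJoin ℝ (B i) (B j) := by
    intro i j hij
    apply Subset.antisymm
    · -- hard direction
      intro y hy
      by_contra hyJ
      have hJconv : Convex ℝ (convexJoin ℝ (B i) (B j)) := (hBconv i).convexJoin (hBconv j)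
      have hJcomp : IsCompact (convexJoin ℝ (B i) (B j)) :=
        isCompact_convexJoin (hBcomp i) (hBcomp j)
      obtain ⟨g, u', hgJ, hgy⟩ :=
        geometric_hahn_banach_closed_point hJconv hJcomp.isClosed hyJ
      have h0J : (0 : Eu) ∈ convexJoin ℝ (B i) (B j) :=
        subset_convexJoin_left ⟨0, h0B j⟩ (h0B i)
      have hu' : 0 < u' := by have := hgJ 0 h0J; simpa using this
      set xh : Eu := u'⁻¹ • fvec g with hxh
      have hxhBi : xh ∈ pol (B i) := by
        intro b hb
        rw [hxh, real_inner_smul_right, inner_fvec']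
        rw [inv_mul_le_iff₀ hu']
        have := hgJ b (subset_convexJoin_left ⟨0, h0B j⟩ hb)
        linarith
      have hxhBj : xh ∈ pol (B j) := by
        intro b hb
        rw [hxh, real_inner_smul_right, inner_fvec']
        rw [inv_mul_le_iff₀ hu']
        have := hgJ b (subset_convexJoin_right ⟨0, h0B i⟩ hb)
        linarith
      have hclo : xh ∈ closure (A' i) ∩ closure (A' j) := by
        constructor
        · rw [← pol_pol_eq_closure (hA'c i) (h0A' i)]; exact hxhBi
        · rw [← pol_pol_eq_closure (hA'c j) (h0A' j)]; exact hxhBj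
      have hcloK : xh ∈ closure K' :=
        closure_inter_subset_closure (hA'c i) (hA'o i) (hA'c j) (hA'o j)
          (h0A' i) (h0A' j) (hA'A' i j hij) hclo
      have hle : (inner ℝ xh y : ℝ) ≤ 1 := pol_mem_of_closure hy hcloK
      rw [hxh, real_inner_smul_left, inner_fvec] at hle
      rw [inv_mul_le_iff₀ hu'] at hle
      linarith
    · -- easy direction
      exact convexJoin_subset (hBL i) (hBL j) hLconv
  -- the distinguished point y*
  set ys : Eu := u⁻¹ • fvec f with hys
  have hysL : ys ∈ L := by
    intro x hx
    rw [hys, real_inner_smul_right, inner_fvec']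
    rw [inv_mul_le_iff₀ hu]
    have := hfK x hx; linarith
  have hysB : ∀ i, ys ∉ B i := by
    intro i hyB
    obtain ⟨q, hqA, hqf⟩ := hq i
    have := hyB q hqA
    rw [hys, real_inner_smul_right, inner_fvec'] at this
    rw [inv_mul_le_iff₀ hu] at this
    linarith
  have hiB : IsClosed (⋃ i, B i) := isClosed_iUnion_of_finite fun i => isClosed_pol _
  -- the covering claim
  have hcover : convexHull ℝ (L.extremePoints ℝ) ⊆ ⋃ i, B i := by
    intro p hp
    rw [convexHull_eq_union] at hp
    simp only [mem_iUnion] at hp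
    obtain ⟨t, hts, hai, hpt⟩ := hp
    have hext : ∀ e ∈ t, ∀ i j, i ≠ j → e ∈ B i ∪ B j := by
      intro e he i j hij
      have heL : e ∈ L.extremePoints ℝ := hts he
      have heseg := mem_extremePoints_iff_forall_segment.mp heL
      have heJ : e ∈ convexJoin ℝ (B i) (B j) := by rw [← hJoin i j hij]; exact heseg.1
      rw [mem_convexJoin] at heJ
      obtain ⟨a, ha, b, hb, hab⟩ := heJ
      rcases heseg.2 a (hBL i ha) b (hBL j hb) hab with h | h
      · left; rw [← h]; exact ha
      · right; rw [← h]; exact hb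
    by_cases hcase : ∃ i, ∀ e ∈ t, e ∈ B i
    · obtain ⟨i, hi⟩ := hcase
      exact mem_iUnion.2 ⟨i, convexHull_min hi (hBconv i) hpt⟩
    · push_neg at hcase
      choose e he hne using hcase
      have hinj : Function.Injective e := by
        intro i j hij
        by_contra hne'
        rcases hext (e i) (he i) i j hne' with h | h
        · exact hne i h
        · exact hne j (hij ▸ h)
      have hcardt : Fintype.card {x // x ∈ t} = t.card := Fintype.card_coe t
      have hinj2 : Function.Injective (fun i : Fin (d+1) => (⟨e i, he i⟩ : {x // x ∈ t})) := by
        intro a b hab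
        exact hinj (congrArg Subtype.val hab)
      have hc1 : d + 1 ≤ t.card := by
        have := Fintype.card_le_of_injective _ hinj2
        simpa [hcardt] using this
      have hc2 : t.card ≤ d + 1 := by
        have h1 := hai.card_le_finrank_succ
        have h2 : Module.finrank ℝ
            (vectorSpan ℝ (Set.range ((↑) : {x // x ∈ t} → Eu))) ≤ d := by
          have h3 := Submodule.finrank_le (vectorSpan ℝ (Set.range ((↑) : {x // x ∈ t} → Eu)))
          rwa [finrank_euclideanSpace_fin] at h3
        rw [hcardt] at h1
        omega
      have hcard : t.card = d + 1 := le_antisymm hc2 hc1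
      have hbij : Function.Bijective (fun i : Fin (d+1) => (⟨e i, he i⟩ : {x // x ∈ t})) :=
        (Fintype.bijective_iff_injective_and_card _).2 ⟨hinj2, by simp [hcardt, hcard]⟩
      have hmem : ∀ x ∈ t, ∀ i, x ≠ e i → x ∈ B i := by
        intro x hx i hxi
        obtain ⟨j, hj⟩ := hbij.2 ⟨x, hx⟩
        have hxj : x = e j := (congrArg Subtype.val hj).symm
        have hij : i ≠ j := by intro h; rw [h] at hxi; exact hxi hxj
        rcases hext x hx i j hij with h | h
        · exact h
        · exfalso; rw [hxj] at h; exact hne j h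
      obtain ⟨w, hw0, hw1, hwp⟩ := Finset.mem_convexHull'.mp hpt
      have hld : ¬ LinearIndependent ℝ ((↑) : {x // x ∈ t} → Eu) := by
        intro hli
        have := hli.fintype_card_le_finrank
        rw [hcardt, hcard, finrank_euclideanSpace_fin] at this
        omega
      obtain ⟨g, hgsum, i₁, hi₁⟩ := Fintype.not_linearIndependent_iff.mp hld
      set G : Eu → ℝ := fun x => if hx : x ∈ t then g ⟨x, hx⟩ else 0 with hG
      have hGg : ∀ i : {x // x ∈ t}, G ↑i = g i := by
        intro i; simp only [hG, dif_pos i.2]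
      have hGsum : ∑ x ∈ t, G x • x = 0 := by
        rw [← Finset.sum_coe_sort t (fun x => G x • x)]
        rw [← hgsum]
        apply Finset.sum_congr rfl
        intro i _
        rw [hGg]
      have hGne : G ↑i₁ ≠ 0 := by rw [hGg]; exact hi₁
      -- sign normalisation
      have hnorm : ∃ g' : Eu → ℝ, (∑ x ∈ t, g' x • x = 0) ∧ (0 ≤ ∑ x ∈ t, g' x) ∧
          (∃ x ∈ t, 0 < g' x) := by
        have hnegsum : ∑ x ∈ t, (-G x) • x = 0 := by
          have : ∀ x, (-G x) • x = -(G x • x) := fun x => neg_smul _ _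
          calc ∑ x ∈ t, (-G x) • x = ∑ x ∈ t, -(G x • x) :=
                Finset.sum_congr rfl fun x _ => this x
            _ = -∑ x ∈ t, G x • x := by rw [Finset.sum_neg_distrib]
            _ = 0 := by rw [hGsum, neg_zero]
        rcases lt_trichotomy (∑ x ∈ t, G x) 0 with hlt | heq | hgt
        · refine ⟨fun x => -G x, hnegsum, ?_, ?_⟩
          · rw [Finset.sum_neg_distrib]; linarith
          · by_contra hno
            push_neg at hno
            have : 0 ≤ ∑ x ∈ t, G x := Finset.sum_nonneg fun x hx => by
              have := hno x hx; linarith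
            linarith
        · rcases lt_or_gt_of_ne hGne with hneg | hpos
          · refine ⟨fun x => -G x, hnegsum, ?_, ⟨↑i₁, i₁.2, by simpa using hneg⟩⟩
            rw [Finset.sum_neg_distrib]; linarith
          · exact ⟨G, hGsum, by linarith, ⟨↑i₁, i₁.2, hpos⟩⟩
        · refine ⟨G, hGsum, by linarith, ?_⟩
          by_contra hno
          push_neg at hno
          have : ∑ x ∈ t, G x ≤ 0 := Finset.sum_nonpos fun x hx => by
            have := hno x hx; linarith
          linarith
      obtain ⟨g', hg'0, hg'sum, x₁, hx₁t, hx₁pos⟩ := hnorm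
      set t' := t.filter (fun x => 0 < g' x) with ht'
      have ht'ne : t'.Nonempty := ⟨x₁, Finset.mem_filter.2 ⟨hx₁t, hx₁pos⟩⟩
      obtain ⟨e₀, he₀t', he₀min⟩ := Finset.exists_min_image t' (fun x => w x / g' x) ht'ne
      have he₀t : e₀ ∈ t := (Finset.mem_filter.1 he₀t').1
      have he₀pos : 0 < g' e₀ := (Finset.mem_filter.1 he₀t').2
      set sm := w e₀ / g' e₀ with hsm
      have hs0 : 0 ≤ sm := div_nonneg (hw0 e₀ he₀t) he₀pos.le
      set c : Eu → ℝ := fun x => w x - sm * g' x with hc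
      have hc0 : ∀ x ∈ t, 0 ≤ c x := by
        intro x hx
        by_cases hgx : 0 < g' x
        · have hmin := he₀min x (Finset.mem_filter.2 ⟨hx, hgx⟩)
          simp only [hc, sub_nonneg]
          calc sm * g' x ≤ (w x / g' x) * g' x := mul_le_mul_of_nonneg_right hmin hgx.le
            _ = w x := div_mul_cancel₀ _ (ne_of_gt hgx)
        · push_neg at hgx
          have h1 : sm * g' x ≤ 0 := mul_nonpos_of_nonneg_of_nonpos hs0 hgx
          have h2 := hw0 x hx
          simp only [hc, sub_nonneg]
          linarith
      have hce₀ : c e₀ = 0 := by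
        simp only [hc, hsm]
        rw [div_mul_cancel₀ _ (ne_of_gt he₀pos)]
        ring
      have hcsum : ∑ x ∈ t, c x ≤ 1 := by
        simp only [hc]
        rw [Finset.sum_sub_distrib, hw1, ← Finset.mul_sum]
        have : 0 ≤ sm * ∑ x ∈ t, g' x := mul_nonneg hs0 hg'sum
        linarith
      have hcp : ∑ x ∈ t, c x • x = p := by
        have hterm : ∀ x, c x • x = w x • x - sm • (g' x • x) := by
          intro x
          simp only [hc, sub_smul, smul_smul]
        calc ∑ x ∈ t, c x • x = ∑ x ∈ t, (w x • x - sm • (g' x • x)) := by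
              apply Finset.sum_congr rfl; intro x _; exact hterm x
          _ = (∑ x ∈ t, w x • x) - sm • (∑ x ∈ t, g' x • x) := by
              rw [Finset.sum_sub_distrib, Finset.smul_sum]
          _ = p := by rw [hwp, hg'0, smul_zero, sub_zero]
      obtain ⟨i₀, hi₀⟩ := hbij.2 ⟨e₀, he₀t⟩
      have he₀i₀ : e₀ = e i₀ := (congrArg Subtype.val hi₀).symm
      have herase : ∑ x ∈ t.erase e₀, c x • x = p := by
        rw [← hcp]
        exact Finset.sum_erase t (by rw [hce₀, zero_smul])
      have hp_in : p ∈ B i₀ := by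
        rw [← herase]
        apply convex_absorb (hBconv i₀) (h0B i₀)
        · intro x hx; exact hc0 x (Finset.mem_of_mem_erase hx)
        · calc ∑ x ∈ t.erase e₀, c x ≤ ∑ x ∈ t, c x :=
                Finset.sum_le_sum_of_subset_of_nonneg (Finset.erase_subset _ _)
                  (fun x hx _ => hc0 x hx)
            _ ≤ 1 := hcsum
        · intro x hx
          have hxt := Finset.mem_of_mem_erase hx
          have hxe₀ : x ≠ e₀ := Finset.ne_of_mem_erase hx
          exact hmem x hxt i₀ (by rw [← he₀i₀]; exact hxe₀)
      exact mem_iUnion.2 ⟨i₀, hp_in⟩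
  -- conclude
  have hKM := closure_convexHull_extremePoints hLcomp hLconv
  have hLsub : L ⊆ ⋃ i, B i := by
    rw [← hKM]
    calc closure (convexHull ℝ (L.extremePoints ℝ)) ⊆ closure (⋃ i, B i) := closure_mono hcover
      _ = ⋃ i, B i := hiB.closure_eq
  obtain ⟨i, hi⟩ := mem_iUnion.1 (hLsub hysL)
  exact hysB i hi

end Geometry

end GeoPart

section CodePart

open Finset

section Code

variable {n m : ℕ}

/-- intersection of a family of finsets over an index finset -/
def interT (T : Fin m → Finset (Fin n)) (S : Finset (Fin m)) : Finset (Fin n) :=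
  Finset.univ.filter (fun a => ∀ i ∈ S, a ∈ T i)

lemma mem_interT {T : Fin m → Finset (Fin n)} {S : Finset (Fin m)} {a : Fin n} :
    a ∈ interT T S ↔ ∀ i ∈ S, a ∈ T i := by
  simp [interT]

/-- the code -/
def codeC (z : Fin n) (T : Fin m → Finset (Fin n)) : Set (Finset (Fin n)) :=
  {c | c = ∅ ∨ c = Finset.univ.erase z ∨
    ∃ S : Finset (Fin m), S.Nonempty ∧ (c = interT T S ∨ c = insert z (interT T S))}

variable {z : Fin n} {T : Fin m → Finset (Fin n)} {k : ℕ}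

lemma interT_subset {S : Finset (Fin m)} {i : Fin m} (hi : i ∈ S) : interT T S ⊆ T i :=
  fun a ha => mem_interT.1 ha i hi

lemma T_subset_erase (hz : ∀ i, z ∉ T i) (i : Fin m) : T i ⊆ Finset.univ.erase z := by
  intro a ha
  rw [Finset.mem_erase]
  exact ⟨fun h => hz i (h ▸ ha), Finset.mem_univ a⟩

lemma z_not_mem_interT (hz : ∀ i, z ∉ T i) {S : Finset (Fin m)} (hS : S.Nonempty) :
    z ∉ interT T S := by
  obtain ⟨i, hi⟩ := hS
  intro h
  exact hz i (mem_interT.1 h i hi)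

lemma interT_subset_erase (hz : ∀ i, z ∉ T i) {S : Finset (Fin m)} (hS : S.Nonempty) :
    interT T S ⊆ Finset.univ.erase z := by
  obtain ⟨i, hi⟩ := hS
  exact (interT_subset hi).trans (T_subset_erase hz i)

-- helper intersection identities
lemma erase_inter_insert {A : Finset (Fin n)} (hA : A ⊆ Finset.univ.erase z) :
    (Finset.univ.erase z) ∩ insert z A = A := by
  ext a
  simp only [Finset.mem_inter, Finset.mem_erase, Finset.mem_insert, Finset.mem_univ, and_true]
  constructor
  · rintro ⟨haz, rfl | haA⟩
    · exact absurd rfl haz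
    · exact haA
  · intro ha
    have := hA ha
    rw [Finset.mem_erase] at this
    exact ⟨this.1, Or.inr ha⟩

lemma insert_inter_right {A B : Finset (Fin n)} (hB : z ∉ B) :
    insert z A ∩ B = A ∩ B := by
  ext a
  simp only [Finset.mem_inter, Finset.mem_insert]
  constructor
  · rintro ⟨rfl | haA, haB⟩
    · exact absurd haB hB
    · exact ⟨haA, haB⟩
  · rintro ⟨haA, haB⟩
    exact ⟨Or.inr haA, haB⟩

lemma insert_inter_insert' {A B : Finset (Fin n)} :
    insert z A ∩ insert z B = insert z (A ∩ B) := by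
  ext a
  simp only [Finset.mem_inter, Finset.mem_insert]
  tauto

lemma interT_inter {S S' : Finset (Fin m)} :
    interT T S ∩ interT T S' = interT T (S ∪ S') := by
  ext a
  simp only [Finset.mem_inter, mem_interT, Finset.mem_union]
  constructor
  · rintro ⟨h1, h2⟩ i (hi | hi)
    · exact h1 i hi
    · exact h2 i hi
  · intro h
    exact ⟨fun i hi => h i (Or.inl hi), fun i hi => h i (Or.inr hi)⟩

lemma codeC_inter_complete (hz : ∀ i, z ∉ T i) :
    ∀ c₁ ∈ codeC z T, ∀ c₂ ∈ codeC z T, c₁ ∩ c₂ ∈ codeC z T := by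
  have hzE : z ∉ Finset.univ.erase z := Finset.notMem_erase z _
  rintro c₁ (rfl | rfl | ⟨S, hS, rfl | rfl⟩) c₂ hc₂
  · left; rw [Finset.empty_inter]
  · -- c₁ = E
    rcases hc₂ with rfl | rfl | ⟨S', hS', rfl | rfl⟩
    · left; rw [Finset.inter_empty]
    · right; left; rw [Finset.inter_self]
    · right; right
      exact ⟨S', hS', Or.inl (Finset.inter_eq_right.2 (interT_subset_erase hz hS'))⟩
    · right; right
      exact ⟨S', hS', Or.inl (erase_inter_insert (interT_subset_erase hz hS'))⟩
  · -- c₁ = interT S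
    rcases hc₂ with rfl | rfl | ⟨S', hS', rfl | rfl⟩
    · left; rw [Finset.inter_empty]
    · right; right
      exact ⟨S, hS, Or.inl (Finset.inter_eq_left.2 (interT_subset_erase hz hS))⟩
    · right; right
      exact ⟨S ∪ S', hS.mono Finset.subset_union_left, Or.inl interT_inter⟩
    · right; right
      refine ⟨S ∪ S', hS.mono Finset.subset_union_left, Or.inl ?_⟩
      rw [Finset.inter_comm, insert_inter_right (z_not_mem_interT hz hS),
        Finset.inter_comm, interT_inter]
  · -- c₁ = insert z (interT S)
    rcases hc₂ with rfl | rfl | ⟨S', hS', rfl | rfl⟩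
    · left; rw [Finset.inter_empty]
    · right; right
      refine ⟨S, hS, Or.inl ?_⟩
      rw [Finset.inter_comm, erase_inter_insert (interT_subset_erase hz hS)]
    · right; right
      refine ⟨S ∪ S', hS.mono Finset.subset_union_left, Or.inl ?_⟩
      rw [insert_inter_right (z_not_mem_interT hz hS'), interT_inter]
    · right; right
      refine ⟨S ∪ S', hS.mono Finset.subset_union_left, Or.inr ?_⟩
      rw [insert_inter_insert', interT_inter]


lemma interT_singleton {i : Fin m} : interT T {i} = T i := by
  ext a
  simp [mem_interT]

lemma T_eq_of_subset (hcard : ∀ i, (T i).card = k) {i j : Fin m} (h : T i ⊆ T j) :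
    T i = T j :=
  Finset.eq_of_subset_of_card_le h (by rw [hcard, hcard])

lemma Ecard : (Finset.univ.erase z).card = n - 1 := by
  rw [Finset.card_erase_of_mem (Finset.mem_univ z), Finset.card_univ, Fintype.card_fin]

lemma not_E_subset_T (hcard : ∀ i, (T i).card = k) (hkn : k < n - 1) (i : Fin m) :
    ¬ (Finset.univ.erase z ⊆ T i) := by
  intro h
  have := Finset.card_le_card h
  rw [Ecard, hcard] at this
  omega

lemma E_nonempty (hn1 : 0 < n - 1) : (Finset.univ.erase z : Finset (Fin n)).Nonempty := by
  rw [← Finset.card_pos, Ecard]; exact hn1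

lemma insert_T_mem (i : Fin m) : insert z (T i) ∈ codeC z T := by
  right; right
  exact ⟨{i}, ⟨i, Finset.mem_singleton_self i⟩, Or.inr (by rw [interT_singleton])⟩

lemma E_mem : (Finset.univ.erase z : Finset (Fin n)) ∈ codeC z T := by
  right; left; rfl

lemma maxSet_eq (hz : ∀ i, z ∉ T i) (hcard : ∀ i, (T i).card = k)
    (hkn : k < n - 1) (hn1 : 0 < n - 1) :
    {c | c ∈ codeC z T ∧ ∀ c' ∈ codeC z T, c ⊆ c' → c = c'}
      = ↑(insert (Finset.univ.erase z)
          (Finset.univ.image fun i : Fin m => insert z (T i))) := by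
  have hEne := E_nonempty (z := z) hn1
  ext c
  simp only [Set.mem_setOf_eq, Finset.coe_insert, Set.mem_insert_iff, Finset.coe_image,
    Set.mem_image, Finset.mem_coe, Finset.mem_univ, true_and, Set.mem_setOf_eq]
  constructor
  · rintro ⟨hc, hmax⟩
    rcases hc with rfl | rfl | ⟨S, hS, rfl | rfl⟩
    · exfalso
      have := hmax _ (E_mem (T := T)) (Finset.empty_subset _)
      rw [← this] at hEne
      exact Finset.not_nonempty_empty hEne
    · left; rfl
    · exfalso
      obtain ⟨i₀, hi₀⟩ := hS
      have heq := hmax _ (E_mem (T := T)) (interT_subset_erase hz ⟨i₀, hi₀⟩)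
      have : Finset.univ.erase z ⊆ T i₀ := by
        rw [← heq]; exact interT_subset hi₀
      exact not_E_subset_T hcard hkn i₀ this
    · obtain ⟨i₀, hi₀⟩ := hS
      have hsub : insert z (interT T S) ⊆ insert z (T i₀) :=
        Finset.insert_subset_insert z (interT_subset hi₀)
      have := hmax _ (insert_T_mem i₀) hsub
      right; exact ⟨i₀, this.symm⟩
  · intro hc
    rcases hc with rfl | ⟨i, rfl⟩
    · refine ⟨E_mem, ?_⟩
      rintro c' (rfl | rfl | ⟨S', hS', rfl | rfl⟩) hsub
      · exfalso
        rw [Finset.subset_empty] at hsub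
        rw [hsub] at hEne
        exact Finset.not_nonempty_empty hEne
      · rfl
      · exfalso
        obtain ⟨i₀, hi₀⟩ := hS'
        exact not_E_subset_T hcard hkn i₀ (hsub.trans (interT_subset hi₀))
      · exfalso
        obtain ⟨i₀, hi₀⟩ := hS'
        obtain ⟨j, hjE, hjT⟩ := Finset.not_subset.1 (not_E_subset_T hcard hkn i₀)
        have hj := hsub hjE
        rw [Finset.mem_insert] at hj
        rcases hj with rfl | hj
        · exact (Finset.notMem_erase j _) hjE
        · exact hjT (interT_subset hi₀ hj)
    · refine ⟨insert_T_mem i, ?_⟩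
      rintro c' (rfl | rfl | ⟨S', hS', rfl | rfl⟩) hsub
      · exfalso
        exact (Finset.notMem_empty z) (hsub (Finset.mem_insert_self z _))
      · exfalso
        exact (Finset.notMem_erase z _) (hsub (Finset.mem_insert_self z _))
      · exfalso
        exact z_not_mem_interT hz hS' (hsub (Finset.mem_insert_self z _))
      · obtain ⟨i₀, hi₀⟩ := hS'
        have hTsub : T i ⊆ interT T S' := by
          intro a ha
          have ha' := hsub (Finset.mem_insert_of_mem ha)
          rw [Finset.mem_insert] at ha'
          rcases ha' with rfl | ha'
          · exact absurd ha (hz i)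
          · exact ha'
        have hTi₀ : T i = T i₀ := T_eq_of_subset hcard (hTsub.trans (interT_subset hi₀))
        have : interT T S' = T i := by
          apply Finset.Subset.antisymm
          · rw [hTi₀]; exact interT_subset hi₀
          · exact hTsub
        rw [this]

lemma maxSet_ncard (hz : ∀ i, z ∉ T i) (hcard : ∀ i, (T i).card = k)
    (hinj : Function.Injective T) (hkn : k < n - 1) (hn1 : 0 < n - 1) :
    {c | c ∈ codeC z T ∧ ∀ c' ∈ codeC z T, c ⊆ c' → c = c'}.ncard = m + 1 := by
  rw [maxSet_eq hz hcard hkn hn1, Set.ncard_coe_finset]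
  have hEnot : (Finset.univ.erase z : Finset (Fin n)) ∉
      Finset.univ.image fun i : Fin m => insert z (T i) := by
    rw [Finset.mem_image]
    rintro ⟨i, -, hi⟩
    have hi' : insert z (T i) = Finset.univ.erase z := hi
    have : z ∈ Finset.univ.erase z := by
      rw [← hi']; exact Finset.mem_insert_self z _
    exact (Finset.notMem_erase z _) this
  rw [Finset.card_insert_of_notMem hEnot]
  have hinj2 : Function.Injective (fun i : Fin m => insert z (T i)) := by
    intro i j hij
    apply hinj
    have hij' : insert z (T i) = insert z (T j) := hij
    have h1 : (insert z (T i)).erase z = (insert z (T j)).erase z := by rw [hij']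
    rwa [Finset.erase_insert (hz i), Finset.erase_insert (hz j)] at h1
  rw [Finset.card_image_of_injective _ hinj2, Finset.card_univ, Fintype.card_fin]

lemma cw_of_TiTj_subset (hz : ∀ i, z ∉ T i) (hcard : ∀ i, (T i).card = k)
    (hinj : Function.Injective T) (hk0 : 0 < k) {i j : Fin m} (hij : i ≠ j)
    {c : Finset (Fin n)} (hc : c ∈ codeC z T) (hsub : T i ∪ T j ⊆ c) :
    c = Finset.univ.erase z := by
  have hTi : T i ⊆ c := (Finset.subset_union_left).trans hsub
  have hTj : T j ⊆ c := (Finset.subset_union_right).trans hsub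
  rcases hc with rfl | rfl | ⟨S, hS, rfl | rfl⟩
  · exfalso
    rw [Finset.subset_empty] at hTi
    have := hcard i
    rw [hTi] at this
    simp at this
    omega
  · rfl
  · exfalso
    obtain ⟨i₀, hi₀⟩ := hS
    have h1 : T i = T i₀ := T_eq_of_subset hcard (hTi.trans (interT_subset hi₀))
    have h2 : T j = T i₀ := T_eq_of_subset hcard (hTj.trans (interT_subset hi₀))
    exact hij (hinj (h1.trans h2.symm))
  · exfalso
    obtain ⟨i₀, hi₀⟩ := hS
    have hsub' : ∀ l : Fin m, T l ⊆ insert z (interT T S) → T l ⊆ interT T S := by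
      intro l hl a ha
      have h' := hl ha
      rw [Finset.mem_insert] at h'
      rcases h' with hrfl | h'
      · exact absurd (hrfl ▸ ha) (hz l)
      · exact h'
    have h1 : T i = T i₀ :=
      T_eq_of_subset hcard ((hsub' i hTi).trans (interT_subset hi₀))
    have h2 : T j = T i₀ :=
      T_eq_of_subset hcard ((hsub' j hTj).trans (interT_subset hi₀))
    exact hij (hinj (h1.trans h2.symm))

lemma univ_not_mem_codeC (hz : ∀ i, z ∉ T i) (hcard : ∀ i, (T i).card = k)
    (hkn : k < n - 1) : (Finset.univ : Finset (Fin n)) ∉ codeC z T := by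
  rintro (h | h | ⟨S, hS, h | h⟩)
  · exact (Finset.notMem_empty z) (h ▸ Finset.mem_univ z)
  · exact (Finset.notMem_erase z _) (h ▸ Finset.mem_univ z)
  · exact (z_not_mem_interT hz hS) (h ▸ Finset.mem_univ z)
  · obtain ⟨i₀, hi₀⟩ := hS
    obtain ⟨j, hjE, hjT⟩ := Finset.not_subset.1 (not_E_subset_T hcard hkn i₀)
    have hj : j ∈ insert z (interT T S) := h ▸ Finset.mem_univ j
    rw [Finset.mem_insert] at hj
    rcases hj with hjz | hj
    · rw [hjz] at hjE
      exact (Finset.notMem_erase z _) hjE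
    · exact hjT (interT_subset hi₀ hj)

end Code

end CodePart

section RealPart

open Finset Set

noncomputable section Realization

variable {n m : ℕ}

/-- the open convex sets realizing the code in `ℝ^m` -/
def Ureal (z : Fin n) (T : Fin m → Finset (Fin n)) (i0 : Fin m) :
    Fin n → Set (EuclideanSpace ℝ (Fin m)) := fun j =>
  if j = z then {x | (m : ℝ) < ∑ i, x i ∧ (-1 : ℝ) < x i0}
  else {x | (-1 : ℝ) < x i0 ∧ ∀ i : Fin m, j ∉ T i → x i < 1}

lemma continuous_proj (i : Fin m) : Continuous fun x : EuclideanSpace ℝ (Fin m) => x i :=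
  (EuclideanSpace.proj (𝕜 := ℝ) i).continuous

lemma isLinear_proj (i : Fin m) :
    IsLinearMap ℝ fun x : EuclideanSpace ℝ (Fin m) => x i :=
  ⟨fun x y => rfl, fun c x => rfl⟩

lemma continuous_sumcoord : Continuous fun x : EuclideanSpace ℝ (Fin m) => ∑ i, x i :=
  continuous_finset_sum _ fun i _ => continuous_proj i

lemma isLinear_sumcoord :
    IsLinearMap ℝ fun x : EuclideanSpace ℝ (Fin m) => ∑ i, x i := by
  constructor
  · intro x y
    simp [Finset.sum_add_distrib]
  · intro c x
    simp [Finset.mul_sum]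

lemma Ureal_convex (z : Fin n) (T : Fin m → Finset (Fin n)) (i0 : Fin m) (j : Fin n) :
    Convex ℝ (Ureal z T i0 j) := by
  unfold Ureal
  by_cases hj : j = z
  · rw [if_pos hj]
    exact (convex_halfSpace_gt isLinear_sumcoord (m : ℝ)).inter
      (convex_halfSpace_gt (isLinear_proj i0) (-1 : ℝ))
  · rw [if_neg hj]
    have : {x : EuclideanSpace ℝ (Fin m) | (-1 : ℝ) < x i0 ∧ ∀ i : Fin m, j ∉ T i → x i < 1}
        = {x : EuclideanSpace ℝ (Fin m) | (-1 : ℝ) < x i0} ∩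
          ⋂ i : Fin m, {x : EuclideanSpace ℝ (Fin m) | j ∉ T i → x i < 1} := by
      ext x; simp [Set.mem_iInter]
    rw [this]
    refine (convex_halfSpace_gt (isLinear_proj i0) (-1 : ℝ)).inter (convex_iInter fun i => ?_)
    by_cases hT : j ∈ T i
    · have : {x : EuclideanSpace ℝ (Fin m) | j ∉ T i → x i < 1} = Set.univ := by
        ext x; simp [hT]
      rw [this]; exact convex_univ
    · have : {x : EuclideanSpace ℝ (Fin m) | j ∉ T i → x i < 1}
          = {x : EuclideanSpace ℝ (Fin m) | x i < 1} := by
        ext x; simp [hT]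
      rw [this]
      exact convex_halfSpace_lt (isLinear_proj i) 1

lemma Ureal_isOpen (z : Fin n) (T : Fin m → Finset (Fin n)) (i0 : Fin m) (j : Fin n) :
    IsOpen (Ureal z T i0 j) := by
  unfold Ureal
  by_cases hj : j = z
  · rw [if_pos hj]
    exact (isOpen_lt continuous_const continuous_sumcoord).inter
      (isOpen_lt continuous_const (continuous_proj i0))
  · rw [if_neg hj]
    have : {x : EuclideanSpace ℝ (Fin m) | (-1 : ℝ) < x i0 ∧ ∀ i : Fin m, j ∉ T i → x i < 1}
        = {x : EuclideanSpace ℝ (Fin m) | (-1 : ℝ) < x i0} ∩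
          ⋂ i : Fin m, {x : EuclideanSpace ℝ (Fin m) | j ∉ T i → x i < 1} := by
      ext x; simp [Set.mem_iInter]
    rw [this]
    refine (isOpen_lt continuous_const (continuous_proj i0)).inter
      (isOpen_iInter_of_finite fun i => ?_)
    by_cases hT : j ∈ T i
    · have : {x : EuclideanSpace ℝ (Fin m) | j ∉ T i → x i < 1} = Set.univ := by
        ext x; simp [hT]
      rw [this]; exact isOpen_univ
    · have : {x : EuclideanSpace ℝ (Fin m) | j ∉ T i → x i < 1}
          = {x : EuclideanSpace ℝ (Fin m) | x i < 1} := by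
        ext x; simp [hT]
      rw [this]
      exact isOpen_lt (continuous_proj i) continuous_const


/-- build a Euclidean point from coordinates -/
def xpt (f : Fin m → ℝ) : EuclideanSpace ℝ (Fin m) := (WithLp.equiv 2 (Fin m → ℝ)).symm f

@[simp] lemma xpt_apply (f : Fin m → ℝ) (i : Fin m) : xpt f i = f i := rfl

lemma mem_Uz {z : Fin n} {T : Fin m → Finset (Fin n)} {i0 : Fin m}
    {x : EuclideanSpace ℝ (Fin m)} :
    x ∈ Ureal z T i0 z ↔ ((m : ℝ) < ∑ i, x i ∧ (-1 : ℝ) < x i0) := by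
  simp [Ureal]

lemma mem_Uj {z : Fin n} {T : Fin m → Finset (Fin n)} {i0 : Fin m} {j : Fin n} (hj : j ≠ z)
    {x : EuclideanSpace ℝ (Fin m)} :
    x ∈ Ureal z T i0 j ↔ ((-1 : ℝ) < x i0 ∧ ∀ i : Fin m, j ∉ T i → x i < 1) := by
  simp [Ureal, hj]

theorem codeOf_Ureal (z : Fin n) (T : Fin m → Finset (Fin n)) (i0 : Fin m)
    (hz : ∀ i, z ∉ T i) (hm : 0 < m) :
    codeOf (Ureal z T i0) = codeC z T := by
  apply Set.Subset.antisymm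
  · -- every realized codeword is in the code
    rintro σ ⟨x, hx⟩
    by_cases hx0 : x i0 ≤ -1
    · left
      rw [Finset.eq_empty_iff_forall_notMem]
      intro j hj
      have hxj := (hx j).1 hj
      by_cases hjz : j = z
      · rw [hjz, mem_Uz] at hxj
        linarith [hxj.2]
      · rw [mem_Uj hjz] at hxj
        linarith [hxj.1]
    · push_neg at hx0
      set P : Finset (Fin m) := Finset.univ.filter (fun i => (1:ℝ) ≤ x i) with hP
      have hmemP : ∀ i : Fin m, i ∈ P ↔ (1:ℝ) ≤ x i := by
        intro i; simp [hP]
      -- membership of non-z neurons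
      have hkey : ∀ j : Fin n, j ≠ z → (j ∈ σ ↔ j ∈ interT T P) := by
        intro j hjz
        rw [hx j, mem_Uj hjz, mem_interT]
        constructor
        · rintro ⟨-, h⟩ i hiP
          by_contra hjT
          have := h i hjT
          rw [hmemP] at hiP
          linarith
        · intro h
          refine ⟨hx0, fun i hiT => ?_⟩
          by_contra hge
          push_neg at hge
          exact hiT (h i ((hmemP i).2 hge))
      by_cases hPe : P = ∅
      · -- codeword is the big one
        right; left
        ext j
        rw [Finset.mem_erase]
        constructor
        · intro hj
          refine ⟨?_, Finset.mem_univ j⟩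
          rintro rfl
          have hxz := (hx j).1 hj
          rw [mem_Uz] at hxz
          have hlt : ∑ i, x i < ∑ i : Fin m, (1:ℝ) := by
            apply Finset.sum_lt_sum_of_nonempty
            · exact Finset.univ_nonempty_iff.2 ⟨⟨0, hm⟩⟩
            · intro i _
              by_contra hge
              push_neg at hge
              have : i ∈ P := (hmemP i).2 hge
              rw [hPe] at this
              exact Finset.notMem_empty i this
          rw [Finset.sum_const, Finset.card_univ, Fintype.card_fin, nsmul_eq_mul,
            mul_one] at hlt
          linarith [hxz.1]
        · rintro ⟨hjz, -⟩
          rw [hkey j hjz, mem_interT]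
          intro i hiP
          rw [hPe] at hiP
          exact absurd hiP (Finset.notMem_empty i)
      · have hPne : P.Nonempty := Finset.nonempty_of_ne_empty hPe
        right; right
        refine ⟨P, hPne, ?_⟩
        by_cases hzσ : z ∈ σ
        · right
          ext j
          by_cases hjz : j = z
          · rw [hjz]
            exact ⟨fun _ => Finset.mem_insert_self z _, fun _ => hzσ⟩
          · rw [Finset.mem_insert]
            rw [hkey j hjz]
            constructor
            · exact fun h => Or.inr h
            · rintro (h | h)
              · exact absurd h hjz
              · exact h
        · left
          ext j
          by_cases hjz : j = z
          · subst hjz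
            constructor
            · intro h; exact absurd h hzσ
            · intro h; exact absurd h (z_not_mem_interT hz hPne)
          · exact (hkey j hjz)
  · -- every codeword is realized
    rintro σ (rfl | rfl | ⟨S, hS, rfl | rfl⟩)
    · -- empty codeword
      refine ⟨xpt (fun _ => -2), ?_⟩
      intro j
      simp only [Finset.notMem_empty, false_iff]
      intro hj
      by_cases hjz : j = z
      · rw [hjz, mem_Uz] at hj
        have h2 := hj.2
        simp only [xpt_apply] at h2
        linarith
      · rw [mem_Uj hjz] at hj
        have h2 := hj.1
        simp only [xpt_apply] at h2
        linarith
    · -- codeword univ.erase z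
      refine ⟨xpt (fun _ => 0), ?_⟩
      intro j
      rw [Finset.mem_erase]
      by_cases hjz : j = z
      · subst hjz
        simp only [ne_eq, not_true_eq_false, false_and, false_iff]
        rw [mem_Uz]
        simp only [xpt_apply]
        rw [Finset.sum_const, Finset.card_univ, Fintype.card_fin, nsmul_eq_mul, mul_zero]
        intro h
        have : (0:ℝ) < m := by exact_mod_cast hm
        linarith [h.1]
      · constructor
        · intro _
          rw [mem_Uj hjz]
          constructor
          · simp only [xpt_apply]; norm_num
          · intro i _; simp only [xpt_apply]; norm_num
        · intro _
          exact ⟨hjz, Finset.mem_univ j⟩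
    · -- codeword interT T S
      refine ⟨xpt (fun i => if i ∈ S then 1 else 0), ?_⟩
      intro j
      by_cases hjz : j = z
      · subst hjz
        constructor
        · intro h; exact absurd h (z_not_mem_interT hz hS)
        · intro h
          exfalso
          rw [mem_Uz] at h
          simp only [xpt_apply] at h
          have hsum : ∑ i : Fin m, (if i ∈ S then (1:ℝ) else 0) = S.card := by
            rw [Finset.sum_ite_mem, Finset.univ_inter, Finset.sum_const, nsmul_eq_mul, mul_one]
          rw [hsum] at h
          have hcard0 : S.card ≤ m := by
            have h' := Finset.card_le_univ S
            simpa using h'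
          have hcard : (S.card : ℝ) ≤ m := by exact_mod_cast hcard0
          linarith [h.1]
      · rw [mem_Uj hjz, mem_interT]
        simp only [xpt_apply]
        constructor
        · intro h
          constructor
          · split <;> norm_num
          · intro i hiT
            have hiS : i ∉ S := fun hiS => hiT (h i hiS)
            rw [if_neg hiS]; norm_num
        · rintro ⟨-, h⟩ i hiS
          by_contra hjT
          have := h i hjT
          rw [if_pos hiS] at this
          norm_num at this
    · -- codeword insert z (interT T S)
      obtain ⟨i₁, hi₁⟩ := hS
      refine ⟨xpt (fun i => (if i ∈ S then 1 else 0) + (if i = i₁ then (m+1 : ℝ) else 0)), ?_⟩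
      have hcoord_nonneg : ∀ i : Fin m,
          (0:ℝ) ≤ (if i ∈ S then (1:ℝ) else 0) + (if i = i₁ then (m+1 : ℝ) else 0) := by
        intro i
        have h1 : (0:ℝ) ≤ (if i ∈ S then (1:ℝ) else 0) := by split <;> norm_num
        have h2 : (0:ℝ) ≤ (if i = i₁ then (m+1:ℝ) else 0) := by
          split
          · positivity
          · norm_num
        linarith
      have hcoord_ge1 : ∀ i : Fin m, i ∈ S →
          (1:ℝ) ≤ (if i ∈ S then (1:ℝ) else 0) + (if i = i₁ then (m+1 : ℝ) else 0) := by
        intro i hiS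
        rw [if_pos hiS]
        have h2 : (0:ℝ) ≤ (if i = i₁ then (m+1:ℝ) else 0) := by
          split
          · positivity
          · norm_num
        linarith
      have hcoord_lt1 : ∀ i : Fin m, i ∉ S →
          (if i ∈ S then (1:ℝ) else 0) + (if i = i₁ then (m+1 : ℝ) else 0) < 1 := by
        intro i hiS
        rw [if_neg hiS, if_neg (fun h : i = i₁ => hiS (h ▸ hi₁)), zero_add]
        norm_num
      intro j
      by_cases hjz : j = z
      · subst hjz
        simp only [Finset.mem_insert_self, true_iff]
        rw [mem_Uz]
        simp only [xpt_apply]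
        constructor
        · have hsum : ∑ i : Fin m,
              ((if i ∈ S then (1:ℝ) else 0) + (if i = i₁ then (m+1 : ℝ) else 0))
              = S.card + (m+1) := by
            rw [Finset.sum_add_distrib]
            congr 1
            · rw [Finset.sum_ite_mem, Finset.univ_inter, Finset.sum_const, nsmul_eq_mul, mul_one]
            · rw [Finset.sum_ite_eq' Finset.univ i₁ (fun _ => (m+1:ℝ))]
              rw [if_pos (Finset.mem_univ i₁)]
          rw [hsum]
          have : (0:ℝ) ≤ S.card := by positivity
          linarith
        · have := hcoord_nonneg i0
          linarith
      · rw [mem_Uj hjz]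
        simp only [xpt_apply]
        rw [Finset.mem_insert]
        constructor
        · rintro (h | h)
          · exact absurd h hjz
          · rw [mem_interT] at h
            refine ⟨by linarith [hcoord_nonneg i0], ?_⟩
            intro i hiT
            have hiS : i ∉ S := fun hiS => hiT (h i hiS)
            exact hcoord_lt1 i hiS
        · rintro ⟨-, h⟩
          right
          rw [mem_interT]
          intro i hiS
          by_contra hjT
          have := h i hjT
          have := hcoord_ge1 i hiS
          linarith

end Realization

end RealPart


lemma lower_bound_aux {n m d : ℕ} {k : ℕ} (z : Fin n) (T : Fin m → Finset (Fin n))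
    (hz : ∀ i, z ∉ T i) (hcardT : ∀ i, (T i).card = k) (hinj : Function.Injective T)
    (hkn : k < n - 1) (hk0 : 0 < k) (hdm : d + 1 = m)
    (V : Fin n → Set (EuclideanSpace ℝ (Fin d)))
    (hVc : ∀ i, Convex ℝ (V i)) (hVo : ∀ i, IsOpen (V i))
    (hVcode : codeOf V = codeC z T) : False := by
  classical
  have hmemσ : ∀ (x : EuclideanSpace ℝ (Fin d)) (j : Fin n),
      j ∈ Finset.univ.filter (fun j => x ∈ V j) ↔ x ∈ V j := by
    intro x j; simp
  have hσC : ∀ x : EuclideanSpace ℝ (Fin d),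
      Finset.univ.filter (fun j => x ∈ V j) ∈ codeC z T := by
    intro x
    rw [← hVcode]
    exact ⟨x, fun j => hmemσ x j⟩
  have hmemK : ∀ x : EuclideanSpace ℝ (Fin d),
      x ∈ (⋂ (j : Fin n) (_ : j ≠ z), V j) ↔ ∀ j : Fin n, j ≠ z → x ∈ V j := by
    intro x; simp [Set.mem_iInter]
  have hmemA : ∀ (i : Fin (d + 1)) (x : EuclideanSpace ℝ (Fin d)),
      x ∈ (⋂ (j : Fin n) (_ : j ∈ T (Fin.cast hdm i)), V j) ↔
        ∀ j ∈ T (Fin.cast hdm i), x ∈ V j := by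
    intro i x; simp [Set.mem_iInter]
  refine petals_dim_bound (⋂ (j : Fin n) (_ : j ≠ z), V j) (V z)
    (fun i => ⋂ (j : Fin n) (_ : j ∈ T (Fin.cast hdm i)), V j)
    ?_ ?_ ?_ (hVc z) (hVo z) ?_ ?_ ?_ ?_ ?_ ?_
  · exact convex_iInter fun j => convex_iInter fun _ => hVc j
  · exact isOpen_iInter_of_finite fun j => isOpen_iInter_of_finite fun _ => hVo j
  · have hE : (Finset.univ.erase z) ∈ codeOf V := by rw [hVcode]; exact E_mem
    obtain ⟨x, hx⟩ := hE
    refine ⟨x, (hmemK x).2 fun j hj => ?_⟩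
    exact (hx j).1 (Finset.mem_erase.2 ⟨hj, Finset.mem_univ j⟩)
  · ext x
    simp only [Set.mem_inter_iff, Set.mem_empty_iff_false, iff_false]
    rintro ⟨hxK, hxW⟩
    have huniv : Finset.univ.filter (fun j => x ∈ V j) = Finset.univ := by
      rw [Finset.eq_univ_iff_forall]
      intro j
      rw [hmemσ]
      by_cases hjz : j = z
      · rw [hjz]; exact hxW
      · exact (hmemK x).1 hxK j hjz
    have hmem := hσC x
    rw [huniv] at hmem
    exact univ_not_mem_codeC hz hcardT hkn hmem
  · intro i
    exact convex_iInter fun j => convex_iInter fun _ => hVc j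
  · intro i
    exact isOpen_iInter_of_finite fun j => isOpen_iInter_of_finite fun _ => hVo j
  · intro i x hx
    rw [hmemA]
    intro j hj
    refine (hmemK x).1 hx j ?_
    intro hjz
    rw [hjz] at hj
    exact hz _ hj
  · intro i j hij x hx
    have hsub : T (Fin.cast hdm i) ∪ T (Fin.cast hdm j)
        ⊆ Finset.univ.filter (fun l => x ∈ V l) := by
      intro l hl
      rw [hmemσ]
      rw [Finset.mem_union] at hl
      rcases hl with hl | hl
      · exact (hmemA _ x).1 hx.1 l hl
      · exact (hmemA _ x).1 hx.2 l hl
    have hne : Fin.cast hdm i ≠ Fin.cast hdm j := fun h => hij (Fin.cast_injective _ h)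
    have hcw := cw_of_TiTj_subset hz hcardT hinj hk0 hne (hσC x) hsub
    rw [hmemK]
    intro l hlz
    have hl : l ∈ Finset.univ.filter (fun l => x ∈ V l) := by
      rw [hcw]
      exact Finset.mem_erase.2 ⟨hlz, Finset.mem_univ l⟩
    exact (hmemσ x l).1 hl
  · intro i
    have hins : insert z (T (Fin.cast hdm i)) ∈ codeOf V := by
      rw [hVcode]; exact insert_T_mem _
    obtain ⟨x, hx⟩ := hins
    refine ⟨x, ?_, ?_⟩
    · rw [hmemA]
      intro j hj
      exact (hx j).1 (Finset.mem_insert_of_mem hj)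
    · exact (hx z).1 (Finset.mem_insert_self z _)

theorem exists_code_with_odim {n m : ℕ} (hn : 2 ≤ n) (hm1 : 1 ≤ m)
    (hm2 : m ≤ (n-1).choose ((n-1)/2)) :
    ∃ C : Set (Finset (Fin n)), ∅ ∈ C ∧
      (∀ c₁ ∈ C, ∀ c₂ ∈ C, c₁ ∩ c₂ ∈ C) ∧
      {c | c ∈ C ∧ ∀ c' ∈ C, c ⊆ c' → c = c'}.ncard = m + 1 ∧
      HasOpenRealization n C m ∧ ¬ HasOpenRealization n C (m-1) := by
  classical
  set k := (n-1)/2 with hk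
  have hn1 : 0 < n - 1 := by omega
  have hkn : k < n - 1 := Nat.div_lt_self hn1 one_lt_two
  set z : Fin n := ⟨n-1, by omega⟩ with hzdef
  -- choose the subsets
  have hcardP : ((Finset.univ.erase z).powersetCard k).card = (n-1).choose k := by
    rw [Finset.card_powersetCard, Ecard]
  obtain ⟨Q, hQsub, hQcard⟩ :=
    Finset.exists_subset_card_eq (s := (Finset.univ.erase z).powersetCard k) (n := m)
      (by rw [hcardP]; exact hm2)
  set T : Fin m → Finset (Fin n) :=
    fun i => (Q.equivFin.symm (Fin.cast hQcard.symm i) : Finset (Fin n)) with hTdef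
  have hTQ : ∀ i, T i ∈ Q := fun i => (Q.equivFin.symm (Fin.cast hQcard.symm i)).2
  have hTpc : ∀ i, T i ⊆ Finset.univ.erase z ∧ (T i).card = k := by
    intro i
    have := hQsub (hTQ i)
    rwa [Finset.mem_powersetCard] at this
  have hz : ∀ i, z ∉ T i := by
    intro i hzi
    have := (hTpc i).1 hzi
    exact (Finset.notMem_erase z _) this
  have hcardT : ∀ i, (T i).card = k := fun i => (hTpc i).2
  have hinj : Function.Injective T := by
    intro i j hij
    have h1 : Q.equivFin.symm (Fin.cast hQcard.symm i)
        = Q.equivFin.symm (Fin.cast hQcard.symm j) := Subtype.ext hij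
    have h2 := Q.equivFin.symm.injective h1
    exact Fin.cast_injective _ h2
  refine ⟨codeC z T, Or.inl rfl, codeC_inter_complete hz,
    maxSet_ncard hz hcardT hinj hkn hn1, ?_, ?_⟩
  · -- realization in dimension m
    exact ⟨Ureal z T ⟨0, hm1⟩, Ureal_convex z T _, Ureal_isOpen z T _,
      codeOf_Ureal z T _ hz hm1⟩
  · -- no realization in dimension m - 1
    rintro ⟨V, hUc, hUo, hUcode⟩
    by_cases hmone : m = 1
    · -- dimension 0
      have hempty : IsEmpty (Fin (m-1)) := by
        rw [hmone]
        exact Fin.isEmpty'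
      have hsub : ∀ x y : EuclideanSpace ℝ (Fin (m-1)), x = y := by
        intro x y
        ext i
        exact absurd i.2 (by omega)
      have h1 : (∅ : Finset (Fin n)) ∈ codeOf V := by rw [hUcode]; exact Or.inl rfl
      have h2 : (Finset.univ.erase z) ∈ codeOf V := by rw [hUcode]; exact E_mem
      obtain ⟨x, hx⟩ := h1
      obtain ⟨y, hy⟩ := h2
      obtain ⟨j, hj⟩ := E_nonempty (z := z) hn1
      have := (hx j).2
      rw [hsub x y] at this
      exact (Finset.notMem_empty j) (this ((hy j).1 hj))
    · -- dimension m - 1 ≥ 1 : use the geometric theorem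
      have hk0 : 0 < k := by
        rcases Nat.eq_zero_or_pos k with h0 | h
        · exfalso
          rw [h0, Nat.choose_zero_right] at hm2
          omega
        · exact h
      exact lower_bound_aux z T hz hcardT hinj hkn hk0 (by omega) V hUc hUo hUcode
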